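/- Let (Ω, F, P) be a probability space with a filtration (F_t)_{t ≥ 1}, and let (Y_t)_{t ≥ 1} be a real martingale with Y_1 = 0 and |Y_t − Y_{t−1}| ≤ 1 almost surely for t ≥ 2. Let (X_t)_{t ≥ 2} be a predictable process with almost surely nonnegative increments, let W_t = Σ_{τ=2}^t E[(Y_τ − Y_{τ−1})² | F_{τ−1}], and suppose almost surely W_t ≤ c·X_t for all t, for a constant c > 0. Set ξ = 1/(4c + 2/3). Let g : ℕ → ℝ be nondecreasing with X_t ≥ g(t) almost surely for all t, and let t₀ satisfy g(t₀) ≥ 2. Then for every δ ∈ (0, 1) and every t* ≥ t₀ with g(t*) ≥ (1/ξ)·log(1/(δ·(e^ξ − 1))), we have P[∃ t ≥ t* : Y_t > X_t] ≤ δ. -/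

import Mathlib

open MeasureTheory Filter

noncomputable def expTail (x : ℝ) : ℝ := ∑' n : ℕ, x ^ (n + 2) / (n + 2).factorial

lemma summable_expTail (x : ℝ) : Summable (fun n : ℕ => x ^ (n + 2) / (n + 2).factorial) := by
  have := Real.summable_pow_div_factorial x
  exact (summable_nat_add_iff 2).2 this

lemma exp_eq_expTail (x : ℝ) : Real.exp x = 1 + x + expTail x := by
  have hsum : Summable (fun n : ℕ => x ^ n / n.factorial) := Real.summable_pow_div_factorial x
  have h : Real.exp x = ∑' n : ℕ, x ^ n / n.factorial := by
    rw [Real.exp_eq_exp_ℝ, NormedSpace.exp_eq_tsum_div]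
  rw [h, Summable.tsum_eq_zero_add hsum]
  have hsum1 : Summable (fun n : ℕ => x ^ (n + 1) / (n + 1).factorial) :=
    (summable_nat_add_iff 1).2 hsum
  rw [Summable.tsum_eq_zero_add hsum1]
  simp [expTail]
  ring

lemma exp_mul_le_of_abs_le {l x : ℝ} (hl : 0 ≤ l) (hx : |x| ≤ 1) :
    Real.exp (l * x) ≤ 1 + l * x + (Real.exp l - 1 - l) * x ^ 2 := by
  have hTl : Real.exp l - 1 - l = expTail l := by rw [exp_eq_expTail l]; ring
  rw [exp_eq_expTail (l * x), hTl]
  have hterm : ∀ n : ℕ, (l * x) ^ (n + 2) / (n + 2).factorial ≤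
      x ^ 2 * (l ^ (n + 2) / (n + 2).factorial) := by
    intro n
    rw [← mul_div_assoc]
    apply div_le_div_of_nonneg_right (c := ((n + 2).factorial : ℝ)) _ (by positivity)
    · rw [mul_pow, mul_comm (x ^ 2) _]
      apply mul_le_mul_of_nonneg_left _ (by positivity)
      calc x ^ (n + 2) ≤ |x ^ (n + 2)| := le_abs_self _
        _ = |x| ^ n * |x| ^ 2 := by rw [abs_pow]; ring
        _ ≤ 1 ^ n * |x| ^ 2 := by
            apply mul_le_mul_of_nonneg_right (pow_le_pow_left₀ (abs_nonneg x) hx n) (by positivity)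
        _ = x ^ 2 := by rw [one_pow, one_mul, sq_abs]
  have hle : expTail (l * x) ≤ x ^ 2 * expTail l := by
    rw [expTail, expTail, ← tsum_mul_left]
    exact Summable.tsum_le_tsum hterm (summable_expTail _) ((summable_expTail l).mul_left _)
  linarith

lemma two_mul_three_pow_le_factorial (n : ℕ) : 2 * 3 ^ n ≤ (n + 2).factorial := by
  induction n with
  | zero => simp [Nat.factorial]
  | succ k ih =>
      have : (k + 3).factorial = (k + 3) * (k + 2).factorial := rfl
      calc 2 * 3 ^ (k + 1) = 3 * (2 * 3 ^ k) := by ring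
        _ ≤ 3 * (k + 2).factorial := by omega
        _ ≤ (k + 3) * (k + 2).factorial := by
            apply Nat.mul_le_mul_right; omega
        _ = (k + 3).factorial := this.symm

lemma exp_remainder_le {x : ℝ} (hx0 : 0 ≤ x) (hx3 : x < 3) :
    Real.exp x - 1 - x ≤ x ^ 2 / (2 * (1 - x / 3)) := by
  have hT : Real.exp x - 1 - x = expTail x := by rw [exp_eq_expTail x]; ring
  rw [hT]
  have hr : (0:ℝ) ≤ x / 3 := by positivity
  have hr1 : x / 3 < 1 := by linarith
  have hgeom : Summable (fun n : ℕ => x ^ 2 / 2 * (x / 3) ^ n) :=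
    (summable_geometric_of_lt_one hr hr1).mul_left _
  have hterm : ∀ n : ℕ, x ^ (n + 2) / (n + 2).factorial ≤ x ^ 2 / 2 * (x / 3) ^ n := by
    intro n
    have h1 : x ^ 2 / 2 * (x / 3) ^ n = x ^ (n + 2) / (2 * 3 ^ n) := by
      rw [div_pow]; ring
    rw [h1]
    apply div_le_div_of_nonneg_left (by positivity) (by positivity)
    · exact_mod_cast two_mul_three_pow_le_factorial n
  calc expTail x ≤ ∑' n : ℕ, x ^ 2 / 2 * (x / 3) ^ n :=
        Summable.tsum_le_tsum hterm (summable_expTail _) hgeom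
    _ = x ^ 2 / 2 * (1 - x / 3)⁻¹ := by
        rw [tsum_mul_left, tsum_geometric_of_lt_one hr hr1]
    _ = x ^ 2 / (2 * (1 - x / 3)) := by
        field_simp


set_option maxHeartbeats 1000000 in
/-- Let `(Y_t)` be a real martingale with `Y_1 = 0` and increments
bounded by `1` a.s., let `(X_t)` be a predictable process with a.s. nonnegative
increments, let `W_t = Σ_{τ=2}^t E[(Y_τ − Y_{τ−1})² | ℱ_{τ−1}]`, and suppose a.s.
`W_t ≤ c·X_t` for all `t`, for a constant `c > 0`.  Set `ξ = 1/(4c + 2/3)`.  Let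
`g : ℕ → ℝ` be nondecreasing with `X_t ≥ g(t)` a.s. for all `t`, and let `t₀` satisfy
`g(t₀) ≥ 2`.  Then for every `δ ∈ (0, 1)` and every `t* ≥ t₀` with
`g(t*) ≥ (1/ξ)·log(1/(δ·(e^ξ − 1)))`, we have `P[∃ t ≥ t* : Y_t > X_t] ≤ δ`. -/
theorem freedman_quantitative_error_bound
    {Ω : Type*} {m0 : MeasurableSpace Ω} {P : Measure Ω} [IsProbabilityMeasure P]
    (ℱ : Filtration ℕ m0) (Y X W : ℕ → Ω → ℝ) (c : ℝ) (hc : 0 < c)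
    (hY : Martingale Y ℱ P)
    (hY1 : ∀ᵐ ω ∂P, Y 1 ω = 0)
    (hbdd : ∀ t : ℕ, 2 ≤ t → ∀ᵐ ω ∂P, |Y t ω - Y (t - 1) ω| ≤ 1)
    (hXmeas : ∀ t : ℕ, 2 ≤ t → Measurable[ℱ (t - 1)] (X t))
    (hXincr : ∀ᵐ ω ∂P, ∀ t : ℕ, X t ω ≤ X (t + 1) ω)
    (hW : ∀ t : ℕ, W t
      = fun ω => ∑ τ ∈ Finset.Icc 2 t,
          (P[(fun ω' => (Y τ ω' - Y (τ - 1) ω') ^ 2)|ℱ (τ - 1)]) ω)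
    (hWX : ∀ᵐ ω ∂P, ∀ t : ℕ, W t ω ≤ c * X t ω)
    (g : ℕ → ℝ) (hg : Monotone g)
    (hXg : ∀ t : ℕ, ∀ᵐ ω ∂P, g t ≤ X t ω)
    (t₀ : ℕ) (ht₀ : 2 ≤ g t₀)
    (δ : ℝ) (hδ : δ ∈ Set.Ioo (0 : ℝ) 1)
    (tstar : ℕ) (htstar : t₀ ≤ tstar)
    (hgt : (1 / (1 / (4 * c + 2 / 3))) *
        Real.log (1 / (δ * (Real.exp (1 / (4 * c + 2 / 3)) - 1))) ≤ g tstar) :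
    P {ω | ∃ t : ℕ, tstar ≤ t ∧ X t ω < Y t ω} ≤ ENNReal.ofReal δ := by
  obtain ⟨hδ0, hδ1⟩ := hδ
  set ξ : ℝ := 1 / (4 * c + 2 / 3) with hξdef
  have hξ0 : 0 < ξ := by positivity
  set l : ℝ := 2 * ξ with hldef
  have hl0 : 0 < l := by positivity
  have hq : (0:ℝ) < 4 * c + 2 / 3 := by linarith
  have hl3 : l < 3 := by
    rw [hldef, hξdef, mul_one_div, div_lt_iff₀ hq]
    nlinarith
  set p : ℝ := Real.exp l - 1 - l with hpdef
  have hp0 : 0 ≤ p := by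
    have := Real.add_one_le_exp l
    simp only [hpdef]; linarith
  -- c * p ≤ ξ / 2
  have hcp : c * p ≤ ξ / 2 := by
    have hA := exp_remainder_le hl0.le hl3
    have hrel : ξ * (4 * c + 2 / 3) = 1 := by rw [hξdef]; exact one_div_mul_cancel hq.ne'
    have h4ct : 1 - l / 3 = 4 * c * ξ := by rw [hldef]; linear_combination -hrel
    have hcξ : (0:ℝ) < 4 * c * ξ := by positivity
    have hl2 : l ^ 2 / (2 * (1 - l / 3)) = ξ / (2 * c) := by
      rw [h4ct, hldef, div_eq_div_iff (by positivity) (by positivity)]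
      ring
    have h5 : p ≤ ξ / (2 * c) := by
      rw [← hl2]; simpa [hpdef] using hA
    calc c * p ≤ c * (ξ / (2 * c)) := mul_le_mul_of_nonneg_left h5 hc.le
      _ = ξ / 2 := by field_simp
  have hβ : 3 / 2 * ξ ≤ l - c * p := by
    simp only [hldef]; linarith
  set K : ℝ := g tstar with hKdef
  have hK2 : 2 ≤ K := le_trans ht₀ (hg htstar)
  -- the exponential supermartingale
  set V : ℕ → Ω → ℝ :=
    fun τ => P[(fun ω' => (Y τ ω' - Y (τ - 1) ω') ^ 2)|ℱ (τ - 1)] with hVdef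
  set S : ℕ → Ω → ℝ := fun n ω => Real.exp (l * Y (n + 1) ω - p * W (n + 1) ω) with hSdef
  set 𝒢 : Filtration ℕ m0 :=
    { seq := fun n => ℱ (n + 1)
      mono' := fun i j hij => ℱ.mono (by omega)
      le' := fun n => ℱ.le (n + 1) } with h𝒢def
  have hYsm : ∀ t, StronglyMeasurable[ℱ t] (Y t) := hY.stronglyAdapted
  have hYint : ∀ t, Integrable (Y t) P := hY.integrable
  have hWsm : ∀ n : ℕ, StronglyMeasurable[ℱ n] (W (n + 1)) := by
    intro n
    rw [hW]
    refine Finset.stronglyMeasurable_fun_sum _ fun τ hτ => ?_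
    have hτ' : τ - 1 ≤ n := by
      simp only [Finset.mem_Icc] at hτ; omega
    exact stronglyMeasurable_condExp.mono (ℱ.mono hτ')
  have hSsm : ∀ n, StronglyMeasurable[ℱ (n + 1)] (S n) := by
    intro n
    apply Real.continuous_exp.comp_stronglyMeasurable
    exact ((hYsm (n + 1)).const_mul l).sub
      (((hWsm n).mono (ℱ.mono n.le_succ)).const_mul p)
  -- a.e. facts
  have hY1' : Y 1 =ᵐ[P] (0 : Ω → ℝ) := hY1
  have hY0 : Y 0 =ᵐ[P] (0 : Ω → ℝ) := by
    have h1 : P[Y 1|ℱ 0] =ᵐ[P] Y 0 := hY.condExp_ae_eq zero_le_one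
    have h2 : P[Y 1|ℱ 0] =ᵐ[P] P[(0 : Ω → ℝ)|ℱ 0] := condExp_congr_ae hY1'
    refine h1.symm.trans (h2.trans ?_)
    rw [condExp_zero]
  have hYb : ∀ t : ℕ, ∀ᵐ ω ∂P, |Y t ω| ≤ t := by
    intro t
    induction t with
    | zero => filter_upwards [hY0] with ω h; simp [h]
    | succ k ih =>
        rcases Nat.eq_zero_or_pos k with hk | hk
        · subst hk
          filter_upwards [hY1] with ω h; simp [h]
        · have h2k : 2 ≤ k + 1 := by omega
          filter_upwards [ih, hbdd (k + 1) h2k] with ω h1 h2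
          simp only [Nat.add_sub_cancel] at h2
          have := abs_sub_abs_le_abs_sub (Y (k + 1) ω) (Y k ω)
          push_cast
          linarith
  have hVnn : ∀ τ : ℕ, 0 ≤ᵐ[P] V τ := fun τ =>
    condExp_nonneg (ae_of_all _ fun ω => sq_nonneg _)
  have hVnn' : ∀ᵐ ω ∂P, ∀ τ : ℕ, 0 ≤ V τ ω := ae_all_iff.2 hVnn
  have hWnn : ∀ᵐ ω ∂P, ∀ t : ℕ, 0 ≤ W t ω := by
    filter_upwards [hVnn'] with ω h t
    rw [hW]
    exact Finset.sum_nonneg fun τ _ => h τ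
  have hSb : ∀ n : ℕ, ∀ᵐ ω ∂P, ‖S n ω‖ ≤ Real.exp (l * (n + 1)) := by
    intro n
    filter_upwards [hYb (n + 1), hWnn] with ω h1 h2
    rw [hSdef]
    simp only [Real.norm_eq_abs, abs_of_pos (Real.exp_pos _)]
    apply Real.exp_le_exp.2
    have h3 : l * Y (n + 1) ω ≤ l * (n + 1) := by
      have := le_abs_self (Y (n + 1) ω)
      push_cast at h1 ⊢
      nlinarith
    nlinarith [h2 (n + 1), hp0]
  have hSint : ∀ n, Integrable (S n) P := by
    intro n
    refine Integrable.mono' (integrable_const (Real.exp (l * (n + 1))))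
      ((hSsm n).mono (ℱ.le (n + 1))).aestronglyMeasurable (hSb n)
  -- the supermartingale step
  have hstep : ∀ n : ℕ, P[S (n + 1)|ℱ (n + 1)] ≤ᵐ[P] S n := by
    intro n
    set D : Ω → ℝ := fun ω => Y (n + 2) ω - Y (n + 1) ω with hDdef
    set F : Ω → ℝ := fun ω => Real.exp (l * Y (n + 1) ω - p * W (n + 2) ω) with hFdef
    set Hf : Ω → ℝ := fun ω => Real.exp (l * D ω) with hHdef
    have hDb : ∀ᵐ ω ∂P, |D ω| ≤ 1 := by
      have := hbdd (n + 2) (by omega)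
      simpa [hDdef] using this
    have hDsm : StronglyMeasurable D :=
      ((hYsm (n + 2)).mono (ℱ.le _)).sub ((hYsm (n + 1)).mono (ℱ.le _))
    have hDint : Integrable D P := (hYint _).sub (hYint _)
    have hD2int : Integrable (fun ω => D ω ^ 2) P := by
      refine Integrable.mono' (integrable_const 1)
        (hDsm.pow 2).aestronglyMeasurable ?_
      filter_upwards [hDb] with ω h
      rw [Real.norm_eq_abs, abs_pow, ← one_pow 2]
      exact pow_le_pow_left₀ (abs_nonneg _) h 2
    have hHint : Integrable Hf P := by
      refine Integrable.mono' (integrable_const (Real.exp l))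
        (Real.continuous_exp.comp_stronglyMeasurable
          (hDsm.const_mul l)).aestronglyMeasurable ?_
      filter_upwards [hDb] with ω h
      rw [hHdef]
      simp only [Real.norm_eq_abs, abs_of_pos (Real.exp_pos _)]
      apply Real.exp_le_exp.2
      nlinarith [le_abs_self (D ω), abs_nonneg (D ω)]
    have hprod : S (n + 1) = F * Hf := by
      funext ω
      rw [hSdef, hFdef, hHdef]
      simp only [Pi.mul_apply, ← Real.exp_add]
      congr 1
      rw [hDdef]
      ring
    have hFsm : StronglyMeasurable[ℱ (n + 1)] F :=
      Real.continuous_exp.comp_stronglyMeasurable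
        (((hYsm (n + 1)).const_mul l).sub ((hWsm (n + 1)).const_mul p))
    have hFb : ∀ᵐ ω ∂P, ‖F ω‖ ≤ Real.exp (l * (n + 1)) := by
      filter_upwards [hYb (n + 1), hWnn] with ω h1 h2
      rw [hFdef]
      simp only [Real.norm_eq_abs, abs_of_pos (Real.exp_pos _)]
      apply Real.exp_le_exp.2
      have h3 : l * Y (n + 1) ω ≤ l * (n + 1) := by
        have := le_abs_self (Y (n + 1) ω)
        push_cast at h1 ⊢
        nlinarith
      have h4 : 0 ≤ p * W (n + 2) ω := mul_nonneg hp0 (h2 (n + 2))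
      linarith
    have hpull : P[F * Hf|ℱ (n + 1)] =ᵐ[P] F * P[Hf|ℱ (n + 1)] :=
      condExp_stronglyMeasurable_mul_of_bound (ℱ.le (n + 1)) hFsm hHint
        (Real.exp (l * (n + 1))) hFb
    -- conditional expectation of D is zero
    have hDcond : P[D|ℱ (n + 1)] =ᵐ[P] (0 : Ω → ℝ) := by
      have h1 : P[D|ℱ (n + 1)] =ᵐ[P] P[Y (n + 2)|ℱ (n + 1)] - P[Y (n + 1)|ℱ (n + 1)] := by
        have := condExp_sub (μ := P) (m := ℱ (n + 1)) (hYint (n + 2)) (hYint (n + 1))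
        exact this
      have h2 : P[Y (n + 2)|ℱ (n + 1)] =ᵐ[P] Y (n + 1) := hY.condExp_ae_eq (by omega)
      have h3 : P[Y (n + 1)|ℱ (n + 1)] =ᵐ[P] Y (n + 1) :=
        (condExp_of_stronglyMeasurable (ℱ.le (n + 1)) (hYsm (n + 1)) (hYint (n + 1))).symm ▸
          EventuallyEq.rfl
      filter_upwards [h1, h2, h3] with ω e1 e2 e3
      simp only [Pi.sub_apply, Pi.zero_apply] at *
      rw [e1, e2, e3, sub_self]
    -- V at n+2
    have hV2 : V (n + 2) = P[(fun ω => D ω ^ 2)|ℱ (n + 1)] := by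
      rw [hVdef]
      norm_num
      rfl
    have hVcond : P[(fun ω => 1 + l * D ω + p * D ω ^ 2)|ℱ (n + 1)]
        ≤ᵐ[P] fun ω => 1 + p * V (n + 2) ω := by
      have hsum : P[(fun ω => 1 + l * D ω + p * D ω ^ 2)|ℱ (n + 1)]
          =ᵐ[P] P[(fun _ => (1 : ℝ))|ℱ (n + 1)] + P[(fun ω => l * D ω)|ℱ (n + 1)]
            + P[(fun ω => p * D ω ^ 2)|ℱ (n + 1)] := by
        have h1 : Integrable (fun ω => l * D ω) P := hDint.const_mul l
        have h2 : Integrable (fun ω => p * D ω ^ 2) P := hD2int.const_mul p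
        have ha := condExp_add (μ := P) (m := ℱ (n + 1))
          ((integrable_const (1 : ℝ)).add h1) h2
        have hb := condExp_add (μ := P) (m := ℱ (n + 1)) (integrable_const (1 : ℝ)) h1
        have : (fun ω => 1 + l * D ω + p * D ω ^ 2)
            = ((fun _ => (1:ℝ)) + fun ω => l * D ω) + fun ω => p * D ω ^ 2 := by
          funext ω; simp
        rw [this]
        refine ha.trans ?_
        filter_upwards [hb] with ω h
        simp only [Pi.add_apply] at *
        rw [h]
      have hsm1 : P[(fun ω => l * D ω)|ℱ (n + 1)] =ᵐ[P] l • P[D|ℱ (n + 1)] := by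
        have := condExp_smul (μ := P) (m := ℱ (n + 1)) l D
        exact this
      have hsm2 : P[(fun ω => p * D ω ^ 2)|ℱ (n + 1)]
          =ᵐ[P] p • P[(fun ω => D ω ^ 2)|ℱ (n + 1)] := by
        have := condExp_smul (μ := P) (m := ℱ (n + 1)) p (fun ω => D ω ^ 2)
        exact this
      have hc1 : P[(fun _ => (1 : ℝ))|ℱ (n + 1)] =ᵐ[P] fun _ => (1 : ℝ) := by
        rw [condExp_const (ℱ.le (n + 1))]
      filter_upwards [hsum, hsm1, hsm2, hc1, hDcond] with ω e1 e2 e3 e4 e5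
      simp only [Pi.add_apply, Pi.smul_apply, smul_eq_mul, Pi.zero_apply] at *
      rw [e1, e2, e3, e4, e5, hV2]
      simp
    have hHle : Hf ≤ᵐ[P] fun ω => 1 + l * D ω + p * D ω ^ 2 := by
      filter_upwards [hDb] with ω h
      rw [hHdef, hpdef]
      exact exp_mul_le_of_abs_le hl0.le h
    have hRHSint : Integrable (fun ω => 1 + l * D ω + p * D ω ^ 2) P :=
      ((integrable_const (1 : ℝ)).add (hDint.const_mul l)).add (hD2int.const_mul p)
    have hHcond : P[Hf|ℱ (n + 1)] ≤ᵐ[P] fun ω => 1 + p * V (n + 2) ω :=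
      (condExp_mono hHint hRHSint hHle).trans hVcond
    -- combine
    have hWsucc : ∀ ω, W (n + 2) ω = W (n + 1) ω + V (n + 2) ω := by
      intro ω
      simp only [hW]
      exact Finset.sum_Icc_succ_top (by omega : 2 ≤ n + 1 + 1) (fun τ => V τ ω)
    calc P[S (n + 1)|ℱ (n + 1)] =ᵐ[P] F * P[Hf|ℱ (n + 1)] := by
          rw [hprod]; exact hpull
      _ ≤ᵐ[P] S n := by
          filter_upwards [hHcond, hVnn' ] with ω h1 h2
          simp only [Pi.mul_apply]
          have hF0 : 0 ≤ F ω := (Real.exp_pos _).le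
          have hstep1 : F ω * (P[Hf|ℱ (n + 1)]) ω ≤ F ω * (1 + p * V (n + 2) ω) :=
            mul_le_mul_of_nonneg_left h1 hF0
          have hstep2 : F ω * (1 + p * V (n + 2) ω) ≤ F ω * Real.exp (p * V (n + 2) ω) :=
            mul_le_mul_of_nonneg_left (by linarith [Real.add_one_le_exp (p * V (n + 2) ω)]) hF0
          have hstep3 : F ω * Real.exp (p * V (n + 2) ω) = S n ω := by
            rw [hFdef, hSdef, ← Real.exp_add]
            congr 1
            rw [hWsucc ω]
            ring
          linarith
  have hadp : StronglyAdapted 𝒢 S := fun n => hSsm n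
  have hSuper : Supermartingale S 𝒢 P := supermartingale_nat hadp hSint hstep
  -- initial value
  have hS0 : S 0 =ᵐ[P] fun _ => (1 : ℝ) := by
    have hW1 : ∀ ω, W 1 ω = 0 := by
      intro ω
      rw [hW 1]
      simp
    filter_upwards [hY1] with ω h
    rw [hSdef]
    simp [h, hW1 ω]
  have hS0int : ∫ ω, S 0 ω ∂P = 1 := by
    rw [integral_congr_ae hS0]
    simp
  -- finite-horizon maximal inequality
  set a : ℝ := Real.exp (3 / 2 * ξ * K) with hadef
  have ha0 : 0 < a := Real.exp_pos _
  have hGN : ∀ N : ℕ, P {ω | ∃ n, n ≤ N ∧ a ≤ S n ω} ≤ ENNReal.ofReal (1 / a) := by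
    intro N
    set τf : Ω → WithTop ℕ := fun ω => ((hittingBtwn S (Set.Ici a) 0 N ω : ℕ) : WithTop ℕ) with hτdef
    have hτstop : IsStoppingTime 𝒢 τf :=
      Adapted.isStoppingTime_hittingBtwn hSuper.stronglyAdapted.adapted measurableSet_Ici
    have hτle : ∀ ω, τf ω ≤ N := fun ω => WithTop.coe_le_coe.2 (hittingBtwn_le ω)
    have hsvint : Integrable (stoppedValue S τf) P :=
      integrable_stoppedValue ℕ hτstop hSint hτle
    have hsv1 : ∫ ω, stoppedValue S τf ω ∂P ≤ 1 := by
      have h := (hSuper.neg).expected_stoppedValue_mono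
        (isStoppingTime_const 𝒢 0) hτstop (fun ω => WithTop.coe_le_coe.2 (Nat.zero_le _)) hτle
      simp only [stoppedValue, Pi.neg_apply, integral_neg, neg_le_neg_iff] at h
      calc ∫ ω, stoppedValue S τf ω ∂P = ∫ ω, S (τf ω).untopA ω ∂P := rfl
        _ ≤ ∫ ω, S 0 ω ∂P := h
        _ = 1 := hS0int
    set GN := {ω | ∃ n, n ≤ N ∧ a ≤ S n ω} with hGNdef
    have hmeas : MeasurableSet GN := by
      have : GN = ⋃ (n : ℕ) (_ : n ≤ N), {ω | a ≤ S n ω} := by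
        ext ω; simp [hGNdef]
      rw [this]
      refine MeasurableSet.iUnion fun n => MeasurableSet.iUnion fun _ => ?_
      exact measurableSet_le measurable_const
        (((hSsm n).mono (ℱ.le (n + 1))).measurable)
    have hconst : ∀ ω ∈ GN, a ≤ stoppedValue S τf ω := by
      rintro ω ⟨n, hn, hna⟩
      exact stoppedValue_hittingBtwn_mem ⟨n, ⟨Nat.zero_le _, hn⟩, hna⟩
    have h1 : a * (P GN).toReal ≤ ∫ ω in GN, stoppedValue S τf ω ∂P :=
      by have := setIntegral_ge_of_const_le hmeas (measure_ne_top P GN) hconst hsvint.integrableOn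
         rw [smul_eq_mul, measureReal_def, mul_comm] at this; exact this
    have h2 : ∫ ω in GN, stoppedValue S τf ω ∂P ≤ ∫ ω, stoppedValue S τf ω ∂P :=
      setIntegral_le_integral hsvint (ae_of_all _ fun ω => (Real.exp_pos _).le)
    have h3 : (P GN).toReal ≤ 1 / a := by
      have h4 : a * (P GN).toReal ≤ 1 := le_trans h1 (le_trans h2 hsv1)
      rw [le_div_iff₀ ha0, mul_comm]
      exact h4
    calc P GN = ENNReal.ofReal (P GN).toReal := (ENNReal.ofReal_toReal (measure_ne_top _ _)).symm
      _ ≤ ENNReal.ofReal (1 / a) := ENNReal.ofReal_le_ofReal h3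
  -- infinite horizon
  have hG : P {ω | ∃ n : ℕ, a ≤ S n ω} ≤ ENNReal.ofReal (1 / a) := by
    have hunion : {ω | ∃ n : ℕ, a ≤ S n ω} = ⋃ N : ℕ, {ω | ∃ n, n ≤ N ∧ a ≤ S n ω} := by
      ext ω
      simp only [Set.mem_setOf_eq, Set.mem_iUnion]
      constructor
      · rintro ⟨n, h⟩; exact ⟨n, n, le_refl n, h⟩
      · rintro ⟨N, n, _, h⟩; exact ⟨n, h⟩
    rw [hunion]
    have hdir : Directed (· ⊆ ·) (fun N : ℕ => {ω | ∃ n, n ≤ N ∧ a ≤ S n ω}) := by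
      apply Monotone.directed_le
      intro N M hNM ω
      rintro ⟨n, hn, h⟩
      exact ⟨n, hn.trans hNM, h⟩
    rw [hdir.measure_iUnion]
    exact iSup_le fun N => hGN N
  -- the error event is a.e. contained in the maximal event
  have hsub : {ω | ∃ t : ℕ, tstar ≤ t ∧ X t ω < Y t ω} ≤ᵐ[P] {ω | ∃ n : ℕ, a ≤ S n ω} := by
    filter_upwards [hY0, hY1, hXincr, hWX, hXg tstar] with ω e0 e1 eXi eWc eXg
    simp only [Pi.zero_apply] at e0 e1
    intro hmem
    obtain ⟨t, hts, hXY⟩ := hmem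
    have hXmono : ∀ s u : ℕ, s ≤ u → X s ω ≤ X u ω := by
      intro s u hsu
      induction u with
      | zero => simp_all
      | succ k ih =>
          rcases Nat.lt_or_ge s (k + 1) with h | h
          · exact le_trans (ih (by omega)) (eXi k)
          · have : s = k + 1 := by omega
            rw [this]
    have hXK : K ≤ X t ω := le_trans eXg (hXmono tstar t hts)
    have ht2 : 2 ≤ t := by
      by_contra hlt
      push_neg at hlt
      interval_cases t
      · rw [e0] at hXY; linarith
      · rw [e1] at hXY; linarith
    have hexp : 3 / 2 * ξ * K ≤ l * Y t ω - p * W t ω := by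
      have h1 : l * X t ω ≤ l * Y t ω := mul_le_mul_of_nonneg_left hXY.le hl0.le
      have h2 : p * W t ω ≤ p * (c * X t ω) := mul_le_mul_of_nonneg_left (eWc t) hp0
      have hX0 : 0 ≤ X t ω := by linarith
      have h3 : (l - c * p) * X t ω ≤ l * X t ω - p * (c * X t ω) := le_of_eq (by ring)
      have h4 : 3 / 2 * ξ * X t ω ≤ (l - c * p) * X t ω :=
        mul_le_mul_of_nonneg_right hβ hX0
      have h5 : 3 / 2 * ξ * K ≤ 3 / 2 * ξ * X t ω := by
        apply mul_le_mul_of_nonneg_left hXK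
        positivity
      have h6 : l * X t ω - p * (c * X t ω) ≤ l * Y t ω - p * W t ω :=
        sub_le_sub h1 h2
      exact le_trans h5 (le_trans h4 (le_trans h3 h6))
    refine ⟨t - 1, ?_⟩
    have ht1 : t - 1 + 1 = t := by omega
    rw [hSdef]
    simp only [ht1]
    rw [hadef]
    exact Real.exp_le_exp.2 hexp
  -- conclude
  have hfinal : (1 : ℝ) / a ≤ δ := by
    have hzpos : 0 < δ * (Real.exp ξ - 1) := by
      have : 1 < Real.exp ξ := by
        rw [← Real.exp_zero]
        exact Real.exp_lt_exp.2 hξ0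
      nlinarith
    have hlog : Real.log (1 / (δ * (Real.exp ξ - 1))) ≤ ξ * K := by
      have h1 : (1 / ξ) * Real.log (1 / (δ * (Real.exp ξ - 1))) ≤ K := by
        simpa [hξdef] using hgt
      calc Real.log (1 / (δ * (Real.exp ξ - 1)))
          = ξ * ((1 / ξ) * Real.log (1 / (δ * (Real.exp ξ - 1)))) := by
            field_simp
        _ ≤ ξ * K := mul_le_mul_of_nonneg_left h1 hξ0.le
    have hzexp : 1 / (δ * (Real.exp ξ - 1)) ≤ Real.exp (ξ * K) := by
      have := Real.exp_le_exp.2 hlog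
      calc 1 / (δ * (Real.exp ξ - 1))
          = Real.exp (Real.log (1 / (δ * (Real.exp ξ - 1)))) := by
            rw [Real.exp_log (by positivity)]
        _ ≤ Real.exp (ξ * K) := this
    have hekK : Real.exp (-(ξ * K)) ≤ δ * (Real.exp ξ - 1) := by
      have h1 : 1 ≤ Real.exp (ξ * K) * (δ * (Real.exp ξ - 1)) := by
        rw [div_le_iff₀ hzpos] at hzexp
        linarith
      calc Real.exp (-(ξ * K)) = Real.exp (-(ξ * K)) * 1 := (mul_one _).symm
        _ ≤ Real.exp (-(ξ * K)) * (Real.exp (ξ * K) * (δ * (Real.exp ξ - 1))) :=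
            mul_le_mul_of_nonneg_left h1 (Real.exp_pos _).le
        _ = δ * (Real.exp ξ - 1) := by
            rw [← mul_assoc, ← Real.exp_add, neg_add_cancel, Real.exp_zero, one_mul]
    have hsplit : (1 : ℝ) / a = Real.exp (-(ξ * K)) * Real.exp (-(ξ * K / 2)) := by
      rw [hadef, ← Real.exp_add, one_div, ← Real.exp_neg]
      congr 1
      ring
    have hhalf : Real.exp (-(ξ * K / 2)) ≤ Real.exp (-ξ) := by
      apply Real.exp_le_exp.2
      nlinarith
    calc (1 : ℝ) / a = Real.exp (-(ξ * K)) * Real.exp (-(ξ * K / 2)) := hsplit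
      _ ≤ (δ * (Real.exp ξ - 1)) * Real.exp (-ξ) := by
          apply mul_le_mul hekK hhalf (Real.exp_pos _).le hzpos.le
      _ = δ * (1 - Real.exp (-ξ)) := by
          rw [Real.exp_neg]
          have h0 := (Real.exp_pos ξ).ne'
          field_simp
      _ ≤ δ := by
          nlinarith [Real.exp_pos (-ξ)]
  calc P {ω | ∃ t : ℕ, tstar ≤ t ∧ X t ω < Y t ω}
      ≤ P {ω | ∃ n : ℕ, a ≤ S n ω} := measure_mono_ae hsub
    _ ≤ ENNReal.ofReal (1 / a) := hG
    _ ≤ ENNReal.ofReal δ := ENNReal.ofReal_le_ofReal hfinal
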